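/- Let X and C be independent real-valued random variables on a probability space, suppose the CDF F of X, defined by F(x) = P(X ≤ x), is continuous and satisfies F(t) < 1 for every real t, and let a : [0,1] → ℝ be continuous with A(u) = ∫_0^u a(s) ds. Set T = min(X, C) and let Δ be the indicator of {X ≤ C}. Then E[ Δ·a(F(T)) + (1 − Δ)·(A(1) − A(F(T)))/(1 − F(T)) ] = A(1) − A(0). -/

import Mathlib

open MeasureTheory Set Filter Topology

section Aux

variable {μ : Measure ℝ} [IsProbabilityMeasure μ] {F : ℝ → ℝ}

lemma aux_toReal_eq (hμF : ∀ t, μ (Set.Iic t) = ENNReal.ofReal (F t)) (hF0 : ∀ t, 0 ≤ F t) :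
    (fun t => (μ (Set.Iic t)).toReal) = F :=
  funext fun t => by rw [hμF t, ENNReal.toReal_ofReal (hF0 t)]

lemma aux_tendsto_atTop (hμF : ∀ t, μ (Set.Iic t) = ENNReal.ofReal (F t)) (hF0 : ∀ t, 0 ≤ F t) :
    Tendsto F atTop (𝓝 1) := by
  have h1 : Tendsto (fun t => μ (Set.Iic t)) atTop (𝓝 (μ Set.univ)) :=
    tendsto_measure_Iic_atTop μ
  have h2 : Tendsto (fun t => (μ (Set.Iic t)).toReal) atTop (𝓝 (μ Set.univ).toReal) :=
    (ENNReal.tendsto_toReal (measure_ne_top μ _)).comp h1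
  rw [aux_toReal_eq hμF hF0, measure_univ, ENNReal.toReal_one] at h2
  exact h2

lemma aux_tendsto_atBot (hμF : ∀ t, μ (Set.Iic t) = ENNReal.ofReal (F t)) (hF0 : ∀ t, 0 ≤ F t) :
    Tendsto F atBot (𝓝 0) := by
  have hempty : (⋂ t : ℝ, Set.Iic t) = ∅ :=
    Set.eq_empty_iff_forall_notMem.mpr fun y hy => by
      have := Set.mem_iInter.mp hy (y - 1)
      simp only [Set.mem_Iic] at this; linarith
  have h1 : Tendsto (fun t : ℝ => μ (Set.Iic t)) atBot (𝓝 (μ (⋂ t : ℝ, Set.Iic t))) :=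
    tendsto_measure_iInter_atBot (fun t => measurableSet_Iic.nullMeasurableSet)
      (fun i j hij => Set.Iic_subset_Iic.mpr hij) ⟨0, measure_ne_top μ _⟩
  rw [hempty, measure_empty] at h1
  have h2 : Tendsto (fun t => (μ (Set.Iic t)).toReal) atBot (𝓝 (0 : ENNReal).toReal) :=
    (ENNReal.tendsto_toReal (by simp)).comp h1
  rw [aux_toReal_eq hμF hF0] at h2
  simpa using h2

lemma aux_preimage (hμF : ∀ t, μ (Set.Iic t) = ENNReal.ofReal (F t)) (hFc : Continuous F)
    (hF0 : ∀ t, 0 ≤ F t) (hFlt : ∀ t, F t < 1) (hmono : Monotone F)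
    {u : ℝ} (h0 : 0 ≤ u) (h1 : u < 1) :
    μ {x | F x ≤ u} = ENNReal.ofReal u := by
  have hSclosed : IsClosed {x | F x ≤ u} := isClosed_le hFc continuous_const
  rcases Set.eq_empty_or_nonempty {x | F x ≤ u} with h | hne
  · have hu0 : u ≤ 0 := by
      by_contra hpos
      push_neg at hpos
      have hev : ∀ᶠ t in atBot, F t < u :=
        (aux_tendsto_atBot hμF hF0).eventually_lt_const hpos
      obtain ⟨t, ht⟩ := hev.exists
      exact absurd (Set.eq_empty_iff_forall_notMem.mp h t) (by simp [ht.le])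
    have huz : u = 0 := le_antisymm hu0 h0
    subst huz
    rw [h, measure_empty, ENNReal.ofReal_zero]
  · have hbdd : BddAbove {x | F x ≤ u} := by
      have hev : ∀ᶠ t in atTop, u < F t :=
        (aux_tendsto_atTop hμF hF0).eventually_const_lt h1
      rw [eventually_atTop] at hev
      obtain ⟨x0, hx0⟩ := hev
      refine ⟨x0, fun x hx => ?_⟩
      by_contra hlt
      push_neg at hlt
      exact absurd hx (by simp [not_le.mpr (hx0 x hlt.le)])
    have hsmem : sSup {x | F x ≤ u} ∈ {x | F x ≤ u} := hSclosed.csSup_mem hne hbdd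
    have hSeq : {x | F x ≤ u} = Set.Iic (sSup {x | F x ≤ u}) := by
      apply Set.Subset.antisymm
      · exact fun x hx => le_csSup hbdd hx
      · exact fun x hx => le_trans (hmono hx) hsmem
    have hFs : F (sSup {x | F x ≤ u}) = u := by
      refine le_antisymm hsmem ?_
      by_contra hlt
      push_neg at hlt
      have hnh : {x | F x < u} ∈ 𝓝 (sSup {x | F x ≤ u}) :=
        (isOpen_lt hFc continuous_const).mem_nhds hlt
      obtain ⟨ε, hε, hball⟩ := Metric.mem_nhds_iff.mp hnh
      have hmem2 : sSup {x | F x ≤ u} + ε / 2 ∈ Metric.ball (sSup {x | F x ≤ u}) ε := by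
        rw [Metric.mem_ball, Real.dist_eq, add_sub_cancel_left, abs_of_pos (half_pos hε)]
        exact half_lt_self hε
      have hlt2 : F (sSup {x | F x ≤ u} + ε / 2) < u := hball hmem2
      have hxmem : sSup {x | F x ≤ u} + ε / 2 ∈ {x | F x ≤ u} := le_of_lt hlt2
      have := le_csSup hbdd hxmem
      linarith
    rw [hSeq, hμF, hFs]

lemma aux_map (hμF : ∀ t, μ (Set.Iic t) = ENNReal.ofReal (F t)) (hFc : Continuous F)
    (hF0 : ∀ t, 0 ≤ F t) (hFlt : ∀ t, F t < 1) (hmono : Monotone F) :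
    μ.map F = volume.restrict (Set.Icc 0 1) := by
  haveI : IsProbabilityMeasure (μ.map F) :=
    Measure.isProbabilityMeasure_map hFc.measurable.aemeasurable
  refine Measure.ext_of_Iic (μ.map F) _ fun u => ?_
  rw [Measure.map_apply hFc.measurable measurableSet_Iic,
    Measure.restrict_apply measurableSet_Iic]
  have hpre : F ⁻¹' Set.Iic u = {x | F x ≤ u} := rfl
  rcases lt_or_ge u 0 with hu | hu
  · have h1 : {x | F x ≤ u} = ∅ :=
      Set.eq_empty_iff_forall_notMem.mpr fun x hx => by
        simp only [Set.mem_setOf_eq] at hx; linarith [hF0 x]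
    have h2 : Set.Iic u ∩ Set.Icc (0:ℝ) 1 = ∅ :=
      Set.eq_empty_iff_forall_notMem.mpr fun y hy => by
        simp only [Set.mem_inter_iff, Set.mem_Iic, Set.mem_Icc] at hy; linarith [hy.1, hy.2.1]
    rw [hpre, h1, h2]
    simp
  · rcases lt_or_ge u 1 with hu1 | hu1
    · rw [hpre, aux_preimage hμF hFc hF0 hFlt hmono hu hu1]
      have h2 : Set.Iic u ∩ Set.Icc (0:ℝ) 1 = Set.Icc 0 u := by
        ext y
        simp only [Set.mem_inter_iff, Set.mem_Iic, Set.mem_Icc]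
        constructor
        · rintro ⟨hy1, hy2, _⟩; exact ⟨hy2, hy1⟩
        · rintro ⟨hy2, hy1⟩; exact ⟨hy1, hy2, le_trans hy1 hu1.le⟩
      rw [h2, Real.volume_Icc, sub_zero]
    · have h1 : {x | F x ≤ u} = Set.univ :=
        Set.eq_univ_iff_forall.mpr fun x => le_trans (hFlt x).le hu1
      have h2 : Set.Iic u ∩ Set.Icc (0:ℝ) 1 = Set.Icc 0 1 :=
        Set.inter_eq_self_of_subset_right fun y hy => le_trans hy.2 hu1
      rw [hpre, h1, h2, measure_univ, Real.volume_Icc]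
      norm_num

lemma aux_inner (hμF : ∀ t, μ (Set.Iic t) = ENNReal.ofReal (F t)) (hFc : Continuous F)
    (hF0 : ∀ t, 0 ≤ F t) (hFlt : ∀ t, F t < 1) (hmono : Monotone F)
    {a : ℝ → ℝ} (ha : ContinuousOn a (Set.Icc 0 1))
    {A : ℝ → ℝ} (hA : ∀ u, A u = ∫ s in (0 : ℝ)..u, a s) (c : ℝ) :
    ∫ x, (if x ≤ c then a (F x) else (A 1 - A (F c)) / (1 - F c)) ∂μ = A 1 := by
  obtain ⟨M, hM⟩ := isCompact_Icc.exists_bound_of_continuousOn ha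
  have hFmem : ∀ x, F x ∈ Set.Icc (0:ℝ) 1 := fun x => ⟨hF0 x, (hFlt x).le⟩
  have haF : Continuous fun x => a (F x) := ha.comp_continuous hFc hFmem
  set H : ℝ := (A 1 - A (F c)) / (1 - F c) with hH
  have key : (fun x => if x ≤ c then a (F x) else H)
      = fun x => (Set.Iic c).indicator (fun x => a (F x)) x
          + (Set.Ioi c).indicator (fun _ => H) x := by
    funext x
    by_cases h : x ≤ c
    · simp [Set.indicator_apply, h, not_lt.mpr h]
    · simp [Set.indicator_apply, h, lt_of_not_ge h]
  have hint1 : Integrable ((Set.Iic c).indicator fun x => a (F x)) μ := by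
    refine Integrable.indicator ?_ measurableSet_Iic
    exact Integrable.mono' (integrable_const M) haF.aestronglyMeasurable
      (ae_of_all _ fun x => hM _ (hFmem x))
  have hint2 : Integrable ((Set.Ioi c).indicator fun _ : ℝ => H) μ :=
    (integrable_const H).indicator measurableSet_Ioi
  rw [key, integral_add hint1 hint2, integral_indicator measurableSet_Iic,
    integral_indicator_const _ measurableSet_Ioi]
  -- measure of Ioi c
  have hIoi : (μ (Set.Ioi c)).toReal = 1 - F c := by
    rw [← Set.compl_Iic, measure_compl measurableSet_Iic (measure_ne_top μ _), measure_univ,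
      hμF, ENNReal.toReal_sub_of_le (ENNReal.ofReal_le_one.mpr (hFlt c).le) ENNReal.one_ne_top,
      ENNReal.toReal_one, ENNReal.toReal_ofReal (hF0 c)]
  -- the first integral equals A (F c)
  have hS : μ ({x | F x ≤ F c} \ Set.Iic c) = 0 := by
    have hsub : Set.Iic c ⊆ {x | F x ≤ F c} := fun x hx => hmono hx
    rw [measure_diff hsub measurableSet_Iic.nullMeasurableSet (measure_ne_top μ _),
      aux_preimage hμF hFc hF0 hFlt hmono (hF0 c) (hFlt c), hμF, tsub_self]
  have haeeq : Set.Iic c =ᵐ[μ] {x | F x ≤ F c} := by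
    rw [MeasureTheory.ae_eq_set]
    constructor
    · have hd : Set.Iic c \ {x | F x ≤ F c} = ∅ := Set.diff_eq_empty.mpr fun x hx => hmono hx
      rw [hd]
      exact measure_empty
    · exact hS
  have hmap := aux_map hμF hFc hF0 hFlt hmono
  have hfirst : ∫ x in Set.Iic c, a (F x) ∂μ = A (F c) := by
    rw [setIntegral_congr_set haeeq]
    have hpre : {x | F x ≤ F c} = F ⁻¹' Set.Iic (F c) := rfl
    have hsm : AEStronglyMeasurable a (μ.map F) := by
      rw [hmap]
      exact ha.aestronglyMeasurable measurableSet_Icc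
    rw [hpre, ← setIntegral_map measurableSet_Iic hsm hFc.measurable.aemeasurable,
      hmap, Measure.restrict_restrict measurableSet_Iic]
    have h2 : Set.Iic (F c) ∩ Set.Icc (0:ℝ) 1 = Set.Icc 0 (F c) := by
      ext y
      simp only [Set.mem_inter_iff, Set.mem_Iic, Set.mem_Icc]
      constructor
      · rintro ⟨hy1, hy2, _⟩; exact ⟨hy2, hy1⟩
      · rintro ⟨hy2, hy1⟩; exact ⟨hy1, hy2, le_trans hy1 (hFlt c).le⟩
    rw [h2, integral_Icc_eq_integral_Ioc, ← intervalIntegral.integral_of_le (hF0 c), ← hA]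
  rw [hfirst, measureReal_def, hIoi, smul_eq_mul, hH, mul_div_cancel₀ _ (sub_ne_zero.mpr (hFlt c).ne')]
  ring

end Aux

theorem generalScore_imputedRank_mean {Ω : Type*} [MeasurableSpace Ω] (P : Measure Ω)
    [IsProbabilityMeasure P]
    (X C : Ω → ℝ) (hX : Measurable X) (hC : Measurable C)
    (hXC : ProbabilityTheory.IndepFun X C P)
    (F : ℝ → ℝ) (hF : ∀ x, F x = (P {ω | X ω ≤ x}).toReal)
    (hFc : Continuous F) (hFlt : ∀ t : ℝ, F t < 1)
    (a : ℝ → ℝ) (ha : ContinuousOn a (Set.Icc 0 1))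
    (A : ℝ → ℝ) (hA : ∀ u, A u = ∫ s in (0 : ℝ)..u, a s) :
    ∫ ω, ((if X ω ≤ C ω then (1 : ℝ) else 0) * a (F (min (X ω) (C ω)))
        + (1 - if X ω ≤ C ω then (1 : ℝ) else 0)
          * ((A 1 - A (F (min (X ω) (C ω)))) / (1 - F (min (X ω) (C ω))))) ∂P
      = A 1 - A 0 := by
  set μ := P.map X with hμdef
  set ν := P.map C with hνdef
  haveI : IsProbabilityMeasure μ := Measure.isProbabilityMeasure_map hX.aemeasurable
  haveI : IsProbabilityMeasure ν := Measure.isProbabilityMeasure_map hC.aemeasurable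
  have hμF : ∀ t, μ (Set.Iic t) = ENNReal.ofReal (F t) := by
    intro t
    rw [hμdef, Measure.map_apply hX measurableSet_Iic, hF t,
      ENNReal.ofReal_toReal (measure_ne_top P _)]
    rfl
  have hF0 : ∀ t, 0 ≤ F t := fun t => (hF t) ▸ ENNReal.toReal_nonneg
  have hmono : Monotone F := by
    intro s t hst
    rw [hF s, hF t]
    exact ENNReal.toReal_mono (measure_ne_top P _)
      (measure_mono fun ω hω => le_trans hω hst)
  have hFmem : ∀ x, F x ∈ Set.Icc (0:ℝ) 1 := fun x => ⟨hF0 x, (hFlt x).le⟩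
  -- the two-variable integrand
  set g : ℝ × ℝ → ℝ :=
    fun p => if p.1 ≤ p.2 then a (F p.1) else (A 1 - A (F p.2)) / (1 - F p.2) with hg
  have hrw : ∀ ω, ((if X ω ≤ C ω then (1 : ℝ) else 0) * a (F (min (X ω) (C ω)))
        + (1 - if X ω ≤ C ω then (1 : ℝ) else 0)
          * ((A 1 - A (F (min (X ω) (C ω)))) / (1 - F (min (X ω) (C ω)))))
      = g (X ω, C ω) := by
    intro ω
    by_cases h : X ω ≤ C ω
    · simp [hg, h, min_eq_left h]
    · simp [hg, h, min_eq_right (le_of_lt (lt_of_not_ge h))]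
  -- continuity facts
  have hAcont : ContinuousOn A (Set.Icc 0 1) := by
    have h1 : IntegrableOn a (Set.uIcc (0:ℝ) 1) volume := by
      rw [Set.uIcc_of_le zero_le_one]; exact ha.integrableOn_Icc
    have h2 := intervalIntegral.continuousOn_primitive_interval h1
    rw [Set.uIcc_of_le zero_le_one] at h2
    have hAeq : A = fun x => ∫ t in (0:ℝ)..x, a t := funext hA
    rw [hAeq]
    exact h2
  have hAF : Continuous fun t => A (F t) := hAcont.comp_continuous hFc hFmem
  have hHcont : Continuous fun t => (A 1 - A (F t)) / (1 - F t) :=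
    (continuous_const.sub hAF).div (continuous_const.sub hFc)
      fun t => sub_ne_zero.mpr (hFlt t).ne'
  have haF : Continuous fun x => a (F x) := ha.comp_continuous hFc hFmem
  have hgm : Measurable g := by
    refine Measurable.ite (measurableSet_le measurable_fst measurable_snd) ?_ ?_
    · exact haF.measurable.comp measurable_fst
    · exact hHcont.measurable.comp measurable_snd
  -- bound
  obtain ⟨M, hM⟩ := isCompact_Icc.exists_bound_of_continuousOn ha
  have hIa : ∀ v : ℝ, 0 ≤ v → v < 1 → ‖(A 1 - A v) / (1 - v)‖ ≤ M := by
    intro v hv0 hv1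
    have hint01 : IntervalIntegrable a volume 0 1 := by
      apply ContinuousOn.intervalIntegrable
      rw [Set.uIcc_of_le zero_le_one]; exact ha
    have hint0v : IntervalIntegrable a volume 0 v := by
      apply ContinuousOn.intervalIntegrable
      rw [Set.uIcc_of_le hv0]
      exact ha.mono (Set.Icc_subset_Icc le_rfl hv1.le)
    have hsub : A 1 - A v = ∫ s in v..(1:ℝ), a s := by
      rw [hA, hA]
      exact intervalIntegral.integral_interval_sub_left hint01 hint0v
    have hbnd : ‖∫ s in v..(1:ℝ), a s‖ ≤ M * |1 - v| := by
      apply intervalIntegral.norm_integral_le_of_norm_le_const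
      intro x hx
      rw [Set.uIoc_of_le hv1.le] at hx
      exact hM x ⟨le_trans hv0 hx.1.le, hx.2⟩
    rw [hsub, norm_div]
    rw [div_le_iff₀ (by rw [Real.norm_eq_abs]; rw [abs_of_pos (by linarith)]; linarith)]
    calc ‖∫ s in v..(1:ℝ), a s‖ ≤ M * |1 - v| := hbnd
      _ = M * ‖1 - v‖ := by rw [Real.norm_eq_abs]
  have hgbound : ∀ p : ℝ × ℝ, ‖g p‖ ≤ M := by
    intro p
    rw [hg]
    by_cases h : p.1 ≤ p.2
    · simp only [h, if_true]
      exact hM _ (hFmem p.1)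
    · simp only [h, if_false]
      exact hIa (F p.2) (hF0 p.2) (hFlt p.2)
  have hInt : Integrable g (μ.prod ν) :=
    Integrable.mono' (integrable_const M) hgm.aestronglyMeasurable (ae_of_all _ hgbound)
  have hmapprod : P.map (fun ω => (X ω, C ω)) = μ.prod ν :=
    (ProbabilityTheory.indepFun_iff_map_prod_eq_prod_map_map hX.aemeasurable
      hC.aemeasurable).mp hXC
  calc ∫ ω, ((if X ω ≤ C ω then (1 : ℝ) else 0) * a (F (min (X ω) (C ω)))
        + (1 - if X ω ≤ C ω then (1 : ℝ) else 0)
          * ((A 1 - A (F (min (X ω) (C ω)))) / (1 - F (min (X ω) (C ω))))) ∂P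
      = ∫ ω, g (X ω, C ω) ∂P := integral_congr_ae (ae_of_all _ hrw)
    _ = ∫ p, g p ∂(P.map fun ω => (X ω, C ω)) :=
        (integral_map (hX.prodMk hC).aemeasurable hgm.aestronglyMeasurable).symm
    _ = ∫ p, g p ∂(μ.prod ν) := by rw [hmapprod]
    _ = ∫ c, ∫ x, g (x, c) ∂μ ∂ν := integral_prod_symm g hInt
    _ = ∫ _, A 1 ∂ν := by
        refine integral_congr_ae (ae_of_all _ fun c => ?_)
        exact aux_inner hμF hFc hF0 hFlt hmono ha hA c
    _ = A 1 := by simp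
    _ = A 1 - A 0 := by rw [hA 0, intervalIntegral.integral_same, sub_zero]
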